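/- Let A_k be the 6×6 integer matrix with rows (-1,-1,0,0,-1,0), (0,-1,0,0,-1,0), (0,0,1,1,1,0), (0,0,0,1,1,0), (0,0,0,0,0,0), (0,0,0,0,1,-k), and let ω = e^{iπ/3}. Then for every integer k ≥ 2, the complex matrix M_k = (1-ω)·A_k + (1-ω̄)·A_kᵀ has rank 5. -/

import Mathlib

open Matrix Complex

def A (k : ℤ) : Matrix (Fin 6) (Fin 6) ℤ :=
  !![-1,-1,0,0,-1,0; 0,-1,0,0,-1,0; 0,0,1,1,1,0; 0,0,0,1,1,0; 0,0,0,0,0,0; 0,0,0,0,1,-k]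

noncomputable def ω : ℂ := Complex.exp (Real.pi / 3 * Complex.I)

noncomputable def M (k : ℤ) : Matrix (Fin 6) (Fin 6) ℂ :=
  (1 - ω) • (A k).map (fun x => (x : ℂ)) +
    (1 - (starRingEnd ℂ) ω) • ((A k).map (fun x => (x : ℂ)))ᵀ

lemma homega : ω = 1/2 + ((Real.sqrt 3 : ℝ) : ℂ)/2 * Complex.I := by
  have h : (Real.pi : ℂ) / 3 * Complex.I = ((Real.pi/3 : ℝ) : ℂ) * Complex.I := by push_cast; ring
  rw [ω, h, Complex.exp_mul_I, ← Complex.ofReal_cos, ← Complex.ofReal_sin,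
    Real.cos_pi_div_three, Real.sin_pi_div_three]
  push_cast; ring

lemma hs3 : ((Real.sqrt 3 : ℝ) : ℂ) ^ 2 = 3 := by
  rw [← Complex.ofReal_pow, Real.sq_sqrt (by norm_num : (3:ℝ) ≥ 0)]
  norm_num

lemma hw2 : ω ^ 2 = ω - 1 := by
  rw [homega]
  linear_combination (Complex.I^2/4) * hs3 + (3/4) * Complex.I_sq

lemma hconj : (starRingEnd ℂ) ω = 1 - ω := by
  rw [homega]
  simp [_root_.map_mul, Complex.conj_ofReal, Complex.conj_I, map_ofNat]
  ring

lemma cv6_five {α : Type*} (a : α) (u : Fin 5 → α) : Matrix.vecCons a u 5 = u 4 := rfl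
lemma cv5_four {α : Type*} (a : α) (u : Fin 4 → α) : Matrix.vecCons a u 4 = u 3 := rfl

set_option maxHeartbeats 1000000 in
lemma Mexp (k : ℤ) : M k =
    !![-1, ω-1, 0, 0, ω-1, 0;
       -ω, -1, 0, 0, ω-1, 0;
       0, 0, 1, 1-ω, 1-ω, 0;
       0, 0, ω, 1, 1-ω, 0;
       -ω, -ω, ω, ω, 0, ω;
       0, 0, 0, 0, 1-ω, (-k : ℂ)] := by
  ext i j
  fin_cases i <;> fin_cases j <;>
    simp [M, A, hconj, Matrix.add_apply, Matrix.smul_apply, Matrix.map_apply,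
      Matrix.transpose_apply, Matrix.vecHead, Matrix.vecTail, cv6_five, cv5_four] <;>
    ring

def P : Matrix (Fin 5) (Fin 6) ℂ :=
  !![1,0,0,0,0,0; 0,1,0,0,0,0; 0,0,1,0,0,0; 0,0,0,0,1,0; 0,0,0,0,0,1]

def Q : Matrix (Fin 6) (Fin 5) ℂ :=
  !![1,0,0,0,0; 0,1,0,0,0; 0,0,1,0,0; 0,0,0,0,0; 0,0,0,1,0; 0,0,0,0,1]

set_option maxHeartbeats 1000000 in
lemma hN (k : ℤ) : P * (M k * Q) =
    !![-1, ω-1, 0, ω-1, 0;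
       -ω, -1, 0, ω-1, 0;
       0, 0, 1, 1-ω, 0;
       -ω, -ω, ω, 0, ω;
       0, 0, 0, 1-ω, (-k : ℂ)] := by
  rw [Mexp]
  ext i j
  fin_cases i <;> fin_cases j <;>
    simp [P, Q, Matrix.mul_apply, Fin.sum_univ_succ,
      Matrix.vecHead, Matrix.vecTail, cv6_five, cv5_four]

set_option maxHeartbeats 1000000 in
lemma hdet (k : ℤ) : (P * (M k * Q)).det = -(k:ℂ) := by
  rw [hN]
  simp [Matrix.det_succ_row_zero, Fin.sum_univ_succ]
  simp [Fin.succAbove, Fin.lt_iff_val_lt_val]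
  linear_combination ((1 - (k:ℂ)) * ω^2 + ((k:ℂ) - 1) * ω + (k:ℂ)) * hw2

set_option maxHeartbeats 1000000 in
lemma hv (k : ℤ) : (M k).mulVec ![ω-1, 1, ω-1, 1, 0, 0] = 0 := by
  rw [Mexp]
  ext i
  fin_cases i <;>
    simp [Matrix.mulVec, dotProduct, Fin.sum_univ_succ,
      Matrix.vecHead, Matrix.vecTail, cv6_five, cv5_four]
  · linear_combination -hw2
  · linear_combination hw2

theorem stmt_1 (k : ℤ) (hk : 2 ≤ k) : (M k).rank = 5 := by
  have hub : (M k).rank ≤ 5 := by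
    have hker : 0 < Module.finrank ℂ (LinearMap.ker (M k).mulVecLin) := by
      rw [Module.finrank_pos_iff_exists_ne_zero]
      refine ⟨⟨![ω-1, 1, ω-1, 1, 0, 0], ?_⟩, ?_⟩
      · simpa [LinearMap.mem_ker, Matrix.mulVecLin_apply] using hv k
      · intro h
        have h1 : (![ω-1, 1, ω-1, 1, 0, 0] : Fin 6 → ℂ) 1 = 0 :=
          congrFun (congrArg Subtype.val h) 1
        simp at h1
    have hrn := LinearMap.finrank_range_add_finrank_ker (M k).mulVecLin
    rw [Module.finrank_pi, Fintype.card_fin] at hrn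
    have hr : (M k).rank = Module.finrank ℂ (LinearMap.range (M k).mulVecLin) := rfl
    omega
  have hlb : 5 ≤ (M k).rank := by
    have hk0 : (k : ℂ) ≠ 0 := Int.cast_ne_zero.mpr (by omega)
    have hu : IsUnit (P * (M k * Q)) := by
      rw [Matrix.isUnit_iff_isUnit_det, hdet k, isUnit_iff_ne_zero]
      exact neg_ne_zero.mpr hk0
    have h5 : (P * (M k * Q)).rank = 5 := by
      rw [Matrix.rank_of_isUnit _ hu, Fintype.card_fin]
    calc (5 : ℕ) = (P * (M k * Q)).rank := h5.symm
      _ ≤ (M k * Q).rank := Matrix.rank_mul_le_right P (M k * Q)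
      _ ≤ (M k).rank := Matrix.rank_mul_le_left (M k) Q
  omega
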